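/- Let L ∈ ℝ^{p×d} and b ∈ ℝ^d with b ≠ 0, and for η > 0 define r(η) = (LᵀL + ηI_d)⁻¹ b, where I_d is the d×d identity matrix (note LᵀL + ηI_d is invertible for every η > 0). Then the function η ↦ ‖r(η)‖₂ is strictly monotonically decreasing on (0, ∞): for all η₁ > η₂ > 0 one has ‖r(η₁)‖₂ < ‖r(η₂)‖₂. -/

import Mathlib

open scoped BigOperators Matrix

/-- Euclidean norm of a vector in ℝ^d. -/
noncomputable def euclNorm {d : ℕ} (v : Fin d → ℝ) : ℝ :=
  Real.sqrt (∑ i, (v i) ^ 2)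

lemma posDefM {p d : ℕ} (L : Matrix (Fin p) (Fin d) ℝ) {η : ℝ} (hη : 0 < η) :
    (Lᵀ * L + η • (1 : Matrix (Fin d) (Fin d) ℝ)).PosDef := by
  have h1 : (Lᵀ * L).PosSemidef := by
    have := Matrix.posSemidef_conjTranspose_mul_self L
    simpa [Matrix.conjTranspose_eq_transpose_of_trivial] using this
  have h2 : (η • (1 : Matrix (Fin d) (Fin d) ℝ)).PosDef := by
    refine Matrix.PosDef.of_dotProduct_mulVec_pos ?_ fun x hx => ?_
    · simp [Matrix.IsHermitian]
    · have h : (η • (1 : Matrix (Fin d) (Fin d) ℝ)) *ᵥ x = η • x := by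
        simp [Matrix.smul_mulVec]
      rw [h]
      have hxx : 0 < dotProduct (star x) x := by
        rwa [Matrix.dotProduct_star_self_pos_iff]
      simpa [dotProduct_smul] using mul_pos hη hxx
  exact Matrix.PosDef.posSemidef_add h1 h2

theorem stmt_2 (p d : ℕ) (L : Matrix (Fin p) (Fin d) ℝ) (b : Fin d → ℝ)
    (hb : b ≠ 0) :
    (∀ η : ℝ, 0 < η → IsUnit (Lᵀ * L + η • (1 : Matrix (Fin d) (Fin d) ℝ)).det) ∧
    (∀ η₁ η₂ : ℝ, 0 < η₂ → η₂ < η₁ →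
      euclNorm ((Lᵀ * L + η₁ • (1 : Matrix (Fin d) (Fin d) ℝ))⁻¹.mulVec b) <
      euclNorm ((Lᵀ * L + η₂ • (1 : Matrix (Fin d) (Fin d) ℝ))⁻¹.mulVec b)) := by
  have hdet : ∀ η : ℝ, 0 < η → IsUnit (Lᵀ * L + η • (1 : Matrix (Fin d) (Fin d) ℝ)).det :=
    fun η hη => (posDefM L hη).det_pos.ne'.isUnit
  refine ⟨hdet, fun η₁ η₂ hη₂ hlt => ?_⟩
  have hη₁ : 0 < η₁ := hη₂.trans hlt
  set M₁ := Lᵀ * L + η₁ • (1 : Matrix (Fin d) (Fin d) ℝ) with hM₁def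
  set M₂ := Lᵀ * L + η₂ • (1 : Matrix (Fin d) (Fin d) ℝ) with hM₂def
  have hP₁ := posDefM L hη₁
  have hP₂ := posDefM L hη₂
  set x := M₁⁻¹ *ᵥ b with hxdef
  set y := M₂⁻¹ *ᵥ b with hydef
  have hM₁x : M₁ *ᵥ x = b := by
    rw [hxdef, Matrix.mulVec_mulVec, Matrix.mul_nonsing_inv _ (hdet η₁ hη₁), Matrix.one_mulVec]
  have hM₂y : M₂ *ᵥ y = b := by
    rw [hydef, Matrix.mulVec_mulVec, Matrix.mul_nonsing_inv _ (hdet η₂ hη₂), Matrix.one_mulVec]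
  have hx0 : x ≠ 0 := by
    intro h
    exact hb (by rw [← hM₁x, h, Matrix.mulVec_zero])
  set δ := η₁ - η₂ with hδdef
  have hδ : 0 < δ := sub_pos.mpr hlt
  set w := M₂⁻¹ *ᵥ x with hwdef
  have hM₂w : M₂ *ᵥ w = x := by
    rw [hwdef, Matrix.mulVec_mulVec, Matrix.mul_nonsing_inv _ (hdet η₂ hη₂), Matrix.one_mulVec]
  have hMsum : M₁ = M₂ + δ • (1 : Matrix (Fin d) (Fin d) ℝ) := by
    rw [hM₁def, hM₂def, hδdef, sub_smul]
    abel
  have key : y = x + δ • w := by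
    have hinj : Function.Injective (M₂.mulVec) :=
      Matrix.mulVec_injective_iff_isUnit.mpr hP₂.isUnit
    apply hinj
    rw [hM₂y, Matrix.mulVec_add, Matrix.mulVec_smul, hM₂w, ← hM₁x, hMsum,
      Matrix.add_mulVec, Matrix.smul_mulVec, Matrix.one_mulVec]
  have hxw : 0 < dotProduct x w := by
    have := hP₂.inv.dotProduct_mulVec_pos hx0
    simpa [hwdef] using this
  have hww : 0 ≤ dotProduct w w :=
    Finset.sum_nonneg fun i _ => mul_self_nonneg _
  have hy2 : dotProduct y y =
      dotProduct x x + 2 * δ * dotProduct x w + δ ^ 2 * dotProduct w w := by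
    rw [key]
    simp only [add_dotProduct, dotProduct_add, smul_dotProduct,
      dotProduct_smul, dotProduct_comm w x, smul_eq_mul]
    ring
  have hsum : ∀ v : Fin d → ℝ, (∑ i, (v i) ^ 2) = dotProduct v v := by
    intro v; simp [dotProduct, sq]
  have hlt2 : (∑ i, (x i) ^ 2) < ∑ i, (y i) ^ 2 := by
    rw [hsum, hsum, hy2]
    nlinarith [mul_pos hδ hxw, sq_nonneg δ]
  exact Real.sqrt_lt_sqrt (Finset.sum_nonneg fun i _ => sq_nonneg _) hlt2
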